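/- Fixing γ_acc ∈ (0,1) and r_n < 0, there exists γ' ∈ (0,1) such that for every γ ∈ (γ', 1) the following holds: for every kernel κ : S → PMF S satisfying, with Q* computed for discount γ, (i) for every s ∈ W, support(κ s) ⊆ ⋃ {support(P s a) : a ∈ A s and Q*(s,a) = 0}, and (ii) for every s ∉ W, κ s = P s a for some a ∈ A s maximizing Q*(s,·) over A s, and for every state s ∈ S: μ^κ_s(Safe) = max_π μ^π_s(Safe), where μ^κ_s is the path measure of the Markov chain with transition function κ started at s. -/

import Mathlib

open MeasureTheory Set
open scoped ENNReal Classical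

variable {S : Type*}

def IsPathMeasure [MeasurableSpace S] (P : S → PMF S) (μ : S → Measure (ℕ → S)) : Prop :=
  (∀ s, IsProbabilityMeasure (μ s)) ∧
    ∀ (s : S) (n : ℕ) (x : ℕ → S),
      μ s {ω | ∀ i ≤ n, ω i = x i} =
        (if x 0 = s then 1 else 0) * ∏ i ∈ Finset.range n, (P (x i)) (x (i + 1))

noncomputable def Rw (Acc : Set S) (γacc rn : ℝ) (s : S) : ℝ :=
  if s ∈ Acc then (1 - γacc) * rn else 0

noncomputable def Γw (Acc : Set S) (γacc γ : ℝ) (s : S) : ℝ :=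
  if s ∈ Acc then γacc else γ

noncomputable def Ret (Acc : Set S) (γacc γ rn : ℝ) (ω : ℕ → S) : ℝ :=
  ∑' t : ℕ, Rw Acc γacc rn (ω (t + 1)) * ∏ k ∈ Finset.range t, Γw Acc γacc γ (ω (k + 1))

noncomputable def Val [MeasurableSpace S] (Acc : Set S) (γacc γ rn : ℝ)
    (μ : S → Measure (ℕ → S)) (s : S) : ℝ :=
  ∫ ω, Ret Acc γacc γ rn ω ∂ (μ s)

variable {A : S → Type*}

noncomputable def Valp [MeasurableSpace S] (Acc : Set S) (γacc γ rn : ℝ)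
    (μ : ((s : S) → A s) → S → Measure (ℕ → S)) (π : (s : S) → A s) (s : S) : ℝ :=
  ∫ ω, Ret Acc γacc γ rn ω ∂ (μ π s)

noncomputable def Qp [MeasurableSpace S] [Fintype S]
    (P : (s : S) → A s → PMF S) (Acc : Set S) (γacc γ rn : ℝ)
    (μ : ((s : S) → A s) → S → Measure (ℕ → S)) (π : (s : S) → A s) (s : S) (a : A s) : ℝ :=
  ∑ s' : S, (P s a s').toReal *
    (Rw Acc γacc rn s' + Γw Acc γacc γ s' * Valp Acc γacc γ rn μ π s')

noncomputable def Qstar [MeasurableSpace S] [Fintype S]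
    (P : (s : S) → A s → PMF S) (Acc : Set S) (γacc γ rn : ℝ)
    (μ : ((s : S) → A s) → S → Measure (ℕ → S)) (s : S) (a : A s) : ℝ :=
  ⨆ π : (s' : S) → A s', Qp P Acc γacc γ rn μ π s a

def WinRegion [MeasurableSpace S] (Acc : Set S)
    (μ : ((s : S) → A s) → S → Measure (ℕ → S)) : Set S :=
  {s | ∃ π : (s' : S) → A s', μ π s {ω | ∀ t, ω t ∉ Acc} = 1}

def IsOptimal [MeasurableSpace S] (Acc : Set S) (γacc γ rn : ℝ)
    (μ : ((s : S) → A s) → S → Measure (ℕ → S)) (πo : (s : S) → A s) : Prop :=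
  ∀ s, Valp Acc γacc γ rn μ πo s = ⨆ π : (s' : S) → A s', Valp Acc γacc γ rn μ π s

open Filter Topology

set_option linter.unusedSectionVars false
set_option maxHeartbeats 1000000

namespace SVP
variable {S : Type*} [Fintype S] [MeasurableSpace S] [MeasurableSingletonClass S]

noncomputable def stay (Acc : Set S) (p : S → PMF S) : ℕ → S → ℝ≥0∞
  | 0 => fun s => if s ∈ Acc then 0 else 1
  | n+1 => fun s => if s ∈ Acc then 0 else ∑ s', p s s' * stay Acc p n s'

lemma pmf_sum_eq_one (q : PMF S) : ∑ s', q s' = 1 := by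
  rw [← tsum_fintype (L := SummationFilter.unconditional _)]; exact q.tsum_coe

lemma stay_le_one (Acc : Set S) (p : S → PMF S) : ∀ n s, stay Acc p n s ≤ 1 := by
  intro n; induction n with
  | zero => intro s; simp only [stay]; split <;> simp
  | succ n ih =>
    intro s; simp only [stay]; split
    · exact zero_le_one
    · calc ∑ s', p s s' * stay Acc p n s' ≤ ∑ s', p s s' * 1 :=
        Finset.sum_le_sum (fun s' _ => mul_le_mul_right (ih s') _)
      _ = 1 := by simp [pmf_sum_eq_one]

lemma stay_antitone (Acc : Set S) (p : S → PMF S) : ∀ n s, stay Acc p (n+1) s ≤ stay Acc p n s := by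
  intro n; induction n with
  | zero =>
    intro s; simp only [stay]; split
    · exact le_rfl
    · calc ∑ s', p s s' * stay Acc p 0 s' ≤ ∑ s', p s s' * 1 :=
        Finset.sum_le_sum (fun s' _ => mul_le_mul_right (stay_le_one Acc p 0 s') _)
      _ = 1 := by simp [pmf_sum_eq_one]
  | succ n ih =>
    intro s; simp only [stay]; split
    · exact le_rfl
    · exact Finset.sum_le_sum (fun s' _ => mul_le_mul_right (ih s') _)

noncomputable def pathSum (Acc : Set S) (p : S → PMF S) (n : ℕ) (s : S) : ℝ≥0∞ :=
  ∑ x : Fin (n+1) → S,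
    (if x 0 = s ∧ ∀ i, x i ∉ Acc then ∏ i : Fin n, p (x i.castSucc) (x i.succ) else 0)

lemma pathSum_eq_stay (Acc : Set S) (p : S → PMF S) : ∀ n s, pathSum Acc p n s = stay Acc p n s := by
  intro n; induction n with
  | zero =>
    intro s
    rw [pathSum, Fintype.sum_eq_single (fun _ => s : Fin 1 → S)]
    · by_cases hs : s ∈ Acc
      · simp [stay, hs]
      · simp [stay, hs]
    · intro x hx
      rw [if_neg]
      rintro ⟨h1, -⟩
      exact hx (funext fun i => by rw [Subsingleton.elim i 0]; exact h1)
  | succ n ih =>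
    intro s
    rw [pathSum, ← Equiv.sum_comp (Fin.consEquiv fun _ => S), Fintype.sum_prod_type]
    have hprod : ∀ (s₀ : S) (y : Fin (n+1) → S),
        (∏ i : Fin (n+1), p ((Fin.cons s₀ y : Fin (n+2) → S) i.castSucc) ((Fin.cons s₀ y : Fin (n+2) → S) i.succ)) =
          p s₀ (y 0) * ∏ i : Fin n, p (y i.castSucc) (y i.succ) := by
      intro s₀ y
      simp [Fin.prod_univ_succ, ← Fin.succ_castSucc]
    have hterm : ∀ (s₀ : S) (y : Fin (n+1) → S),
        (if ((Fin.cons s₀ y : Fin (n+2) → S) 0 = s ∧ ∀ i : Fin (n+2), (Fin.cons s₀ y : Fin (n+2) → S) i ∉ Acc)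
          then ∏ i : Fin (n+1), p ((Fin.cons s₀ y : Fin (n+2) → S) i.castSucc) ((Fin.cons s₀ y : Fin (n+2) → S) i.succ) else 0) =
        (if s₀ = s then (if (s₀ ∉ Acc ∧ ∀ i : Fin (n+1), y i ∉ Acc)
          then p s₀ (y 0) * ∏ i : Fin n, p (y i.castSucc) (y i.succ) else 0) else 0) := by
      intro s₀ y
      rw [hprod]
      have hcond : ((Fin.cons s₀ y : Fin (n+2) → S) 0 = s ∧
          ∀ i : Fin (n+2), (Fin.cons s₀ y : Fin (n+2) → S) i ∉ Acc) ↔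
          (s₀ = s ∧ (s₀ ∉ Acc ∧ ∀ i : Fin (n+1), y i ∉ Acc)) := by
        rw [Fin.forall_fin_succ]
        simp only [Fin.cons_zero, Fin.cons_succ, and_assoc]
      rw [if_congr hcond rfl rfl, ite_and]
    simp only [Fin.consEquiv_apply, hterm]
    rw [Finset.sum_eq_single s]
    · by_cases hs : s ∈ Acc
      · simp [stay, hs]
      · simp only [if_pos rfl, stay, if_neg hs]
        have hrhs : ∀ s' : S, p s s' * stay Acc p n s' =
            ∑ y : Fin (n+1) → S, (if y 0 = s' ∧ ∀ i, y i ∉ Acc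
              then p s s' * ∏ i : Fin n, p (y i.castSucc) (y i.succ) else 0) := by
          intro s'
          rw [← ih, pathSum, Finset.mul_sum]
          exact Finset.sum_congr rfl fun y _ => by rw [mul_ite, mul_zero]
        simp only [hrhs]
        rw [Finset.sum_comm]
        refine Finset.sum_congr rfl fun y _ => ?_
        rw [if_pos trivial]
        by_cases hy : ∀ i : Fin (n+1), y i ∉ Acc
        · rw [if_pos ⟨hs, hy⟩, Finset.sum_eq_single (y 0)]
          · rw [if_pos ⟨rfl, hy⟩]
          · intro b _ hb; exact if_neg (fun h => hb h.1.symm)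
          · exact fun h => absurd (Finset.mem_univ _) h
        · rw [if_neg (fun h => hy h.2), Finset.sum_eq_zero]
          intro b _; exact if_neg (fun h => hy h.2)
    · intro b _ hb
      exact Finset.sum_eq_zero fun y _ => if_neg hb
    · exact fun h => absurd (Finset.mem_univ _) h


def Cyl (n : ℕ) (x : Fin (n+1) → S) : Set (ℕ → S) := {ω | ∀ i : Fin (n+1), ω (i : ℕ) = x i}

lemma measurable_cyl (n : ℕ) (x : Fin (n+1) → S) : MeasurableSet (Cyl (S := S) n x) := by
  have h : Cyl (S := S) n x = ⋂ i : Fin (n+1), (fun ω : ℕ → S => ω (i : ℕ)) ⁻¹' {x i} := by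
    ext ω; simp [Cyl]
  rw [h]
  exact MeasurableSet.iInter fun i => (measurable_pi_apply _) (measurableSet_singleton _)

noncomputable def ext0 (n : ℕ) (x : Fin (n+1) → S) : ℕ → S :=
  fun i => if h : i < n + 1 then x ⟨i, h⟩ else x 0

lemma cyl_measure {p : S → PMF S} {ν : S → Measure (ℕ → S)} (hν : IsPathMeasure p ν)
    (s : S) (n : ℕ) (x : Fin (n+1) → S) :
    ν s (Cyl n x) = (if x 0 = s then 1 else 0) * ∏ i : Fin n, p (x i.castSucc) (x i.succ) := by
  have hset : Cyl n x = {ω : ℕ → S | ∀ i ≤ n, ω i = ext0 n x i} := by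
    ext ω
    constructor
    · intro h i hi
      have hlt : i < n + 1 := Nat.lt_succ_of_le hi
      rw [ext0]
      rw [dif_pos hlt]
      exact h ⟨i, hlt⟩
    · intro h i
      have := h (i : ℕ) (Fin.is_le i)
      rw [ext0, dif_pos i.isLt] at this
      simpa using this
  rw [hset, hν.2 s n (ext0 n x)]
  refine congrArg₂ (· * ·) ?_ ?_
  · have h0 : ext0 n x 0 = x 0 := by
      rw [ext0, dif_pos (Nat.succ_pos n)]
      exact congrArg x (Fin.ext rfl)
    rw [h0]
  · rw [← Fin.prod_univ_eq_prod_range (fun i => p (ext0 n x i) (ext0 n x (i+1))) n]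
    refine Finset.prod_congr rfl fun i _ => ?_
    have h1 : ext0 n x (i : ℕ) = x i.castSucc := by
      rw [ext0, dif_pos (Nat.lt_succ_of_lt i.isLt)]
      congr 1
    have h2 : ext0 n x ((i : ℕ) + 1) = x i.succ := by
      rw [ext0, dif_pos (Nat.succ_lt_succ i.isLt)]
      congr 1
    rw [h1, h2]

lemma safeSet_eq (Acc : Set S) (n : ℕ) :
    {ω : ℕ → S | ∀ t ≤ n, ω t ∉ Acc} =
      ⋃ x ∈ Finset.filter (fun x : Fin (n+1) → S => ∀ i, x i ∉ Acc) Finset.univ, Cyl n x := by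
  ext ω
  simp only [Set.mem_setOf_eq, Set.mem_iUnion, Finset.mem_filter, Finset.mem_univ, true_and]
  constructor
  · intro h
    exact ⟨fun i => ω (i : ℕ), fun i => h _ (Fin.is_le i), fun i => rfl⟩
  · rintro ⟨x, hx, hω⟩ t ht
    have := hω ⟨t, Nat.lt_succ_of_le ht⟩
    rw [this]
    exact hx _

lemma measurable_safeSet (Acc : Set S) (n : ℕ) :
    MeasurableSet {ω : ℕ → S | ∀ t ≤ n, ω t ∉ Acc} := by
  rw [safeSet_eq]
  exact (Finset.filter _ _).measurableSet_biUnion fun x _ => measurable_cyl n x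

lemma stay_measure {Acc : Set S} {p : S → PMF S} {ν : S → Measure (ℕ → S)}
    (hν : IsPathMeasure p ν) (s : S) (n : ℕ) :
    ν s {ω : ℕ → S | ∀ t ≤ n, ω t ∉ Acc} = stay Acc p n s := by
  rw [safeSet_eq, measure_biUnion_finset ?hd (fun x _ => measurable_cyl n x)]
  case hd =>
    intro x hx x' hx' hne
    refine Set.disjoint_left.2 fun ω h1 h2 => hne ?_
    exact funext fun i => (h1 i).symm.trans (h2 i)
  rw [← pathSum_eq_stay, pathSum, Finset.sum_filter]
  refine Finset.sum_congr rfl fun x _ => ?_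
  rw [cyl_measure hν]
  by_cases h1 : ∀ i, x i ∉ Acc <;> by_cases h2 : x 0 = s
  · rw [if_pos h1, if_pos h2, if_pos ⟨h2, h1⟩, one_mul]
  · rw [if_pos h1, if_neg h2, if_neg (fun h => h2 h.1), zero_mul]
  · rw [if_neg h1, if_neg (fun h => h1 h.2)]
  · rw [if_neg h1, if_neg (fun h => h1 h.2)]

lemma safe_measure {Acc : Set S} {p : S → PMF S} {ν : S → Measure (ℕ → S)}
    (hν : IsPathMeasure p ν) (s : S) :
    ν s {ω : ℕ → S | ∀ t, ω t ∉ Acc} = ⨅ n, stay Acc p n s := by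
  have hset : {ω : ℕ → S | ∀ t, ω t ∉ Acc} = ⋂ n, {ω : ℕ → S | ∀ t ≤ n, ω t ∉ Acc} := by
    ext ω
    simp only [Set.mem_setOf_eq, Set.mem_iInter]
    exact ⟨fun h n t _ => h t, fun h t => h t t le_rfl⟩
  have hmono : ∀ m n, m ≤ n →
      {ω : ℕ → S | ∀ t ≤ n, ω t ∉ Acc} ⊆ {ω : ℕ → S | ∀ t ≤ m, ω t ∉ Acc} :=
    fun m n hmn ω h t ht => h t (le_trans ht hmn)
  have := hν.1 s
  rw [hset, Directed.measure_iInter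
    (fun n => (measurable_safeSet Acc n).nullMeasurableSet)
    (fun m n => ⟨max m n, hmono _ _ (le_max_left m n), hmono _ _ (le_max_right m n)⟩)
    ⟨0, measure_ne_top _ _⟩]
  exact iInf_congr fun n => stay_measure hν s n


lemma tendsto_finsup {ι : Type*} (t : Finset ι) (f : ι → ℕ → ℝ≥0∞) (L : ι → ℝ≥0∞)
    (h : ∀ i ∈ t, Tendsto (f i) atTop (𝓝 (L i))) :
    Tendsto (fun n => t.sup (fun i => f i n)) atTop (𝓝 (t.sup L)) := by
  classical
  induction t using Finset.cons_induction with
  | empty => simpa using tendsto_const_nhds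
  | cons a t ha ih =>
    simp only [Finset.sup_cons]
    have h1 := h a (Finset.mem_cons_self a t)
    have h2 := ih (fun i hi => h i (Finset.mem_cons_of_mem hi))
    have := h1.max h2
    simpa using this

lemma tendsto_isup {ι : Type*} [Fintype ι] (f : ι → ℕ → ℝ≥0∞) (L : ι → ℝ≥0∞)
    (h : ∀ i, Tendsto (f i) atTop (𝓝 (L i))) :
    Tendsto (fun n => ⨆ i, f i n) atTop (𝓝 (⨆ i, L i)) := by
  have := tendsto_finsup Finset.univ f L (fun i _ => h i)
  simpa [Finset.sup_univ_eq_iSup] using this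

lemma tendsto_psum (q : PMF S) (u : ℕ → S → ℝ≥0∞) (L : S → ℝ≥0∞)
    (h : ∀ s', Tendsto (fun n => u n s') atTop (𝓝 (L s'))) :
    Tendsto (fun n => ∑ s', q s' * u n s') atTop (𝓝 (∑ s', q s' * L s')) := by
  refine tendsto_finset_sum _ fun s' _ => ?_
  exact ENNReal.Tendsto.const_mul (h s') (Or.inr (by exact ne_top_of_le_ne_top ENNReal.one_ne_top (q.coe_le_one s')))

section bellman

variable {A : S → Type*} [∀ s, Fintype (A s)] [∀ s, Nonempty (A s)]

noncomputable def TT (Acc : Set S) (P : (s : S) → A s → PMF S) (f : S → ℝ≥0∞) (s : S) : ℝ≥0∞ :=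
  if s ∈ Acc then 0 else ⨆ a : A s, ∑ s', P s a s' * f s'

noncomputable def uB (Acc : Set S) (P : (s : S) → A s → PMF S) : ℕ → S → ℝ≥0∞
  | 0 => fun _ => 1
  | n+1 => TT Acc P (uB Acc P n)

variable (Acc : Set S) (P : (s : S) → A s → PMF S)

lemma TT_mono {f g : S → ℝ≥0∞} (h : ∀ s, f s ≤ g s) (s : S) : TT Acc P f s ≤ TT Acc P g s := by
  rw [TT, TT]
  split
  · exact le_rfl
  · exact iSup_mono fun a => Finset.sum_le_sum fun s' _ => mul_le_mul_right (h s') _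

lemma uB_le_one : ∀ n s, uB Acc P n s ≤ 1 := by
  intro n
  induction n with
  | zero => intro s; exact le_rfl
  | succ n ih =>
    intro s
    rw [uB, TT]
    split
    · exact zero_le_one
    · refine iSup_le fun a => ?_
      calc ∑ s', P s a s' * uB Acc P n s' ≤ ∑ s', P s a s' * 1 :=
        Finset.sum_le_sum fun s' _ => mul_le_mul_right (ih s') _
      _ = 1 := by simp [pmf_sum_eq_one]

lemma uB_antitone_succ : ∀ n s, uB Acc P (n+1) s ≤ uB Acc P n s := by
  intro n
  induction n with
  | zero => exact fun s => uB_le_one Acc P 1 s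
  | succ n ih => exact fun s => TT_mono Acc P ih s

lemma uB_antitone (s : S) : Antitone fun n => uB Acc P n s :=
  antitone_nat_of_succ_le fun n => uB_antitone_succ Acc P n s

noncomputable def uInf (s : S) : ℝ≥0∞ := ⨅ n, uB Acc P n s

lemma uInf_le_one (s : S) : uInf Acc P s ≤ 1 := iInf_le_of_le 0 le_rfl

lemma uB_tendsto (s : S) : Tendsto (fun n => uB Acc P n s) atTop (𝓝 (uInf Acc P s)) :=
  tendsto_atTop_iInf (uB_antitone Acc P s)

lemma uInf_acc {s : S} (hs : s ∈ Acc) : uInf Acc P s = 0 :=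
  le_antisymm (iInf_le_of_le 1 (by rw [uB, TT, if_pos hs])) zero_le

lemma uInf_fixed (s : S) : TT Acc P (uInf Acc P) s = uInf Acc P s := by
  by_cases hs : s ∈ Acc
  · rw [TT, if_pos hs, uInf_acc Acc P hs]
  · rw [TT, if_neg hs]
    have h1 : Tendsto (fun n => ⨆ a : A s, ∑ s', P s a s' * uB Acc P n s') atTop
        (𝓝 (⨆ a : A s, ∑ s', P s a s' * uInf Acc P s')) :=
      tendsto_isup _ _ fun a => tendsto_psum _ _ _ fun s' => uB_tendsto Acc P s'
    have h2 : Tendsto (fun n => uB Acc P (n+1) s) atTop (𝓝 (uInf Acc P s)) :=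
      (uB_tendsto Acc P s).comp (tendsto_add_atTop_nat 1)
    have h3 : ∀ n, uB Acc P (n+1) s = ⨆ a : A s, ∑ s', P s a s' * uB Acc P n s' := by
      intro n; rw [uB, TT, if_neg hs]
    rw [show (fun n => uB Acc P (n+1) s) = fun n => ⨆ a : A s, ∑ s', P s a s' * uB Acc P n s'
      from funext h3] at h2
    exact tendsto_nhds_unique h1 h2

lemma stay_le_uB (π : (s : S) → A s) : ∀ n s, stay Acc (fun s => P s (π s)) n s ≤ uB Acc P n s := by
  intro n
  induction n with
  | zero => intro s; simp only [stay, uB]; split <;> simp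
  | succ n ih =>
    intro s
    simp only [stay, uB, TT]
    split
    · exact le_rfl
    · refine le_trans ?_ (le_iSup _ (π s))
      exact Finset.sum_le_sum fun s' _ => mul_le_mul_right (ih s') _

lemma spE_le_uInf (π : (s : S) → A s) (s : S) :
    (⨅ n, stay Acc (fun s => P s (π s)) n s) ≤ uInf Acc P s :=
  le_iInf fun n => iInf_le_of_le n (stay_le_uB Acc P π n s)

lemma exists_greedy : ∃ π : (s : S) → A s, ∀ s : S,
    (∑ s', P s (π s) s' * uInf Acc P s') = ⨆ a : A s, ∑ s', P s a s' * uInf Acc P s' := by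
  have h : ∀ s : S, ∃ a : A s,
      (∑ s', P s a s' * uInf Acc P s') = ⨆ a : A s, ∑ s', P s a s' * uInf Acc P s' := by
    intro s
    obtain ⟨a, ha⟩ := Finite.exists_max fun a : A s => ∑ s', P s a s' * uInf Acc P s'
    exact ⟨a, le_antisymm (le_iSup (fun a : A s => ∑ s', P s a s' * uInf Acc P s') a) (iSup_le ha)⟩
  exact ⟨fun s => (h s).choose, fun s => (h s).choose_spec⟩

lemma uInf_le_stay_greedy (π : (s : S) → A s)
    (hπ : ∀ s : S, (∑ s', P s (π s) s' * uInf Acc P s') =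
      ⨆ a : A s, ∑ s', P s a s' * uInf Acc P s') :
    ∀ n s, uInf Acc P s ≤ stay Acc (fun s => P s (π s)) n s := by
  intro n
  induction n with
  | zero =>
    intro s
    simp only [stay]
    split
    · rw [uInf_acc Acc P ‹_›]
    · exact uInf_le_one Acc P s
  | succ n ih =>
    intro s
    simp only [stay]
    split
    · rw [uInf_acc Acc P ‹_›]
    · calc uInf Acc P s = TT Acc P (uInf Acc P) s := (uInf_fixed Acc P s).symm
        _ = ⨆ a : A s, ∑ s', P s a s' * uInf Acc P s' := by rw [TT, if_neg ‹_›]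
        _ = ∑ s', P s (π s) s' * uInf Acc P s' := (hπ s).symm
        _ ≤ ∑ s', P s (π s) s' * stay Acc (fun s => P s (π s)) n s' :=
          Finset.sum_le_sum fun s' _ => mul_le_mul_right (ih s') _

lemma uInf_eq_sup_spE : ∀ s : S, uInf Acc P s =
    ⨆ π : (s' : S) → A s', ⨅ n, stay Acc (fun s => P s (π s)) n s := by
  intro s
  obtain ⟨π, hπ⟩ := exists_greedy Acc P
  refine le_antisymm ?_ (iSup_le fun π' => spE_le_uInf Acc P π' s)
  refine le_trans ?_ (le_iSup _ π)
  exact le_iInf fun n => uInf_le_stay_greedy Acc P π hπ n s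

end bellman


section analytic

variable {Acc : Set S} {γacc γ rn : ℝ}

noncomputable def trm (Acc : Set S) (γacc γ rn : ℝ) (t : ℕ) (ω : ℕ → S) : ℝ :=
  Rw Acc γacc rn (ω (t + 1)) * ∏ k ∈ Finset.range t, Γw Acc γacc γ (ω (k + 1))

lemma Ret_eq_tsum (ω : ℕ → S) : Ret Acc γacc γ rn ω = ∑' t, trm Acc γacc γ rn t ω := rfl

lemma Rw_nonpos (hacc : γacc ≤ 1) (hrn : rn < 0) (s' : S) : Rw Acc γacc rn s' ≤ 0 := by
  rw [Rw]; split
  · exact mul_nonpos_of_nonneg_of_nonpos (by linarith) hrn.le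
  · exact le_rfl

lemma Γw_nonneg (h1 : 0 ≤ γacc) (h2 : 0 ≤ γ) (s' : S) : 0 ≤ Γw Acc γacc γ s' := by
  rw [Γw]; split <;> assumption

lemma Γw_le_one (h1 : γacc ≤ 1) (h2 : γ ≤ 1) (s' : S) : Γw Acc γacc γ s' ≤ 1 := by
  rw [Γw]; split <;> assumption

lemma prod_Γw_nonneg (h1 : 0 ≤ γacc) (h2 : 0 ≤ γ) (ω : ℕ → S) (t : ℕ) :
    0 ≤ ∏ k ∈ Finset.range t, Γw Acc γacc γ (ω (k + 1)) :=
  Finset.prod_nonneg fun k _ => Γw_nonneg h1 h2 _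

lemma trm_nonpos (hacc1 : 0 ≤ γacc) (hacc : γacc ≤ 1) (hγ1 : 0 ≤ γ) (hrn : rn < 0)
    (t : ℕ) (ω : ℕ → S) : trm Acc γacc γ rn t ω ≤ 0 :=
  mul_nonpos_of_nonpos_of_nonneg (Rw_nonpos hacc hrn _) (prod_Γw_nonneg hacc1 hγ1 ω t)

lemma Ret_nonpos (hacc1 : 0 ≤ γacc) (hacc : γacc ≤ 1) (hγ1 : 0 ≤ γ) (hrn : rn < 0)
    (ω : ℕ → S) : Ret Acc γacc γ rn ω ≤ 0 :=
  tsum_nonpos (trm_nonpos hacc1 hacc hγ1 hrn · ω)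

lemma Ret_safe (ω : ℕ → S) (h : ∀ t, ω (t + 1) ∉ Acc) : Ret Acc γacc γ rn ω = 0 := by
  rw [Ret_eq_tsum]
  convert tsum_zero with t
  rw [trm, Rw, if_neg (h t), zero_mul]

lemma Ret_hit (hacc1 : 0 < γacc) (hacc : γacc < 1)
    (ω : ℕ → S) (habsω : ∀ t, ω t ∈ Acc → ω (t + 1) ∈ Acc)
    (h : ∃ t, ω (t + 1) ∈ Acc) :
    Ret Acc γacc γ rn ω = rn * γ ^ (Nat.find h) := by
  set t0 := Nat.find h with ht0
  have hin : ∀ j, ω (t0 + j + 1) ∈ Acc := by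
    intro j
    induction j with
    | zero => simpa using Nat.find_spec h
    | succ j ih =>
      exact habsω (t0 + j + 1) ih
  have hout : ∀ k, k < t0 → ω (k + 1) ∉ Acc := fun k hk => Nat.find_min h hk
  have htrm0 : ∀ t, t < t0 → trm Acc γacc γ rn t ω = 0 := by
    intro t ht
    rw [trm, Rw, if_neg (hout t ht), zero_mul]
  have htrmge : ∀ j, trm Acc γacc γ rn (t0 + j) ω =
      ((1 - γacc) * rn * γ ^ t0) * γacc ^ j := by
    intro j
    rw [trm, Rw, if_pos (hin j), Finset.prod_range_add]
    have h1 : ∏ k ∈ Finset.range t0, Γw Acc γacc γ (ω (k + 1)) = γ ^ t0 := by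
      rw [Finset.prod_congr rfl fun k hk => ?_, Finset.prod_const, Finset.card_range]
      rw [Γw, if_neg (hout k (Finset.mem_range.1 hk))]
    have h2 : ∏ k ∈ Finset.range j, Γw Acc γacc γ (ω (t0 + k + 1)) = γacc ^ j := by
      rw [Finset.prod_congr rfl fun k hk => ?_, Finset.prod_const, Finset.card_range]
      rw [Γw, if_pos (hin k)]
    rw [h1, h2]
    ring
  have hsum : Summable (fun t => trm Acc γacc γ rn t ω) := by
    rw [← summable_nat_add_iff t0]
    have : (fun j => trm Acc γacc γ rn (j + t0) ω) =
        fun j => ((1 - γacc) * rn * γ ^ t0) * γacc ^ j := by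
      funext j; rw [add_comm j t0]; exact htrmge j
    rw [this]
    exact (summable_geometric_of_lt_one hacc1.le hacc).mul_left _
  rw [Ret_eq_tsum, ← Summable.sum_add_tsum_nat_add t0 hsum]
  rw [Finset.sum_eq_zero fun t ht => htrm0 t (Finset.mem_range.1 ht), zero_add]
  have : (fun j => trm Acc γacc γ rn (j + t0) ω) =
      fun j => ((1 - γacc) * rn * γ ^ t0) * γacc ^ j := by
    funext j; rw [add_comm j t0]; exact htrmge j
  rw [this, tsum_mul_left, tsum_geometric_of_lt_one hacc1.le hacc]
  have hne : 1 - γacc ≠ 0 := by linarith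
  field_simp
  try ring

lemma measurable_trm (t : ℕ) : Measurable (trm Acc γacc γ rn t) := by
  apply Measurable.mul
  · exact (measurable_of_countable (Rw Acc γacc rn)).comp (measurable_pi_apply (t + 1))
  · exact Finset.measurable_prod _ fun k _ =>
      (measurable_of_countable (Γw Acc γacc γ)).comp (measurable_pi_apply (k + 1))

lemma abs_Rw_le (hacc : γacc ≤ 1) (s' : S) : |Rw Acc γacc rn s'| ≤ (1 - γacc) * |rn| := by
  rw [Rw]
  split
  · rw [abs_mul, abs_of_nonneg (by linarith : (0:ℝ) ≤ 1 - γacc)]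
  · rw [abs_zero]
    exact mul_nonneg (by linarith) (abs_nonneg _)

lemma abs_trm_le (hacc1 : 0 ≤ γacc) (hacc : γacc ≤ 1) (hγ1 : 0 ≤ γ)
    (t : ℕ) (ω : ℕ → S) :
    |trm Acc γacc γ rn t ω| ≤ ((1 - γacc) * |rn|) * (max γacc γ) ^ t := by
  rw [trm, abs_mul]
  have h1 : |∏ k ∈ Finset.range t, Γw Acc γacc γ (ω (k + 1))| ≤ (max γacc γ) ^ t := by
    rw [abs_of_nonneg (prod_Γw_nonneg hacc1 hγ1 ω t)]
    calc ∏ k ∈ Finset.range t, Γw Acc γacc γ (ω (k + 1))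
        ≤ ∏ _k ∈ Finset.range t, max γacc γ :=
          Finset.prod_le_prod (fun k _ => Γw_nonneg hacc1 hγ1 _)
            (fun k _ => by rw [Γw]; split; exacts [le_max_left _ _, le_max_right _ _])
      _ = (max γacc γ) ^ t := by rw [Finset.prod_const, Finset.card_range]
  refine mul_le_mul (abs_Rw_le hacc _) h1 (abs_nonneg _) ?_
  exact mul_nonneg (by linarith) (abs_nonneg _)


lemma summable_trm (hacc1 : 0 ≤ γacc) (hacc : γacc < 1) (hγ1 : 0 ≤ γ) (hγ : γ < 1)
    (ω : ℕ → S) : Summable (fun t => trm Acc γacc γ rn t ω) := by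
  apply Summable.of_norm_bounded
    ((summable_geometric_of_lt_one (le_max_iff.2 (Or.inl hacc1)) (max_lt hacc hγ)).mul_left
      ((1 - γacc) * |rn|))
  exact fun t => abs_trm_le hacc1 hacc.le hγ1 t ω

lemma measurable_Ret (hacc1 : 0 ≤ γacc) (hacc : γacc < 1) (hγ1 : 0 ≤ γ) (hγ : γ < 1) :
    Measurable (Ret Acc γacc γ rn : (ℕ → S) → ℝ) := by
  apply measurable_of_tendsto_metrizable
    (f := fun n ω => ∑ t ∈ Finset.range n, trm Acc γacc γ rn t ω)
    (fun n => Finset.measurable_sum _ fun t _ => measurable_trm t)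
  rw [tendsto_pi_nhds]
  intro ω
  exact (summable_trm hacc1 hacc hγ1 hγ ω).hasSum.tendsto_sum_nat

end analytic


section meas

variable {Acc : Set S} {γacc γ rn : ℝ} {p : S → PMF S} {ν : S → Measure (ℕ → S)}

lemma null_start (hν : IsPathMeasure p ν) (s : S) : ν s {ω : ℕ → S | ω 0 ≠ s} = 0 := by
  have h := hν.2 s 0 (fun _ => s)
  rw [if_pos (rfl : (fun _ => s) 0 = s)] at h
  simp only [Finset.range_zero, Finset.prod_empty, mul_one] at h
  have hset : {ω : ℕ → S | ∀ i ≤ 0, ω i = (fun _ => s) i} = {ω : ℕ → S | ω 0 = s} := by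
    ext ω
    simp only [Set.mem_setOf_eq, Nat.le_zero]
    constructor
    · intro h2; exact h2 0 rfl
    · intro h2 i hi; rw [hi]; exact h2
  rw [hset] at h
  have hm : MeasurableSet {ω : ℕ → S | ω 0 = s} := by
    have heq : {ω : ℕ → S | ω 0 = s} = (fun ω : ℕ → S => ω 0) ⁻¹' {s} := rfl
    rw [heq]
    exact (measurable_pi_apply 0) (measurableSet_singleton s)
  have := hν.1 s
  have hc : ν s {ω : ℕ → S | ω 0 = s}ᶜ = 0 := by
    rw [prob_compl_eq_one_sub hm, h, tsub_self]
  have hco : {ω : ℕ → S | ω 0 ≠ s} = {ω : ℕ → S | ω 0 = s}ᶜ := rfl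
  rw [hco, hc]

lemma null_nonabs (hν : IsPathMeasure p ν) (habs : ∀ u ∈ Acc, (p u).support ⊆ Acc) (s : S) :
    ν s {ω : ℕ → S | ∃ t, ω t ∈ Acc ∧ ω (t+1) ∉ Acc} = 0 := by
  have hset : {ω : ℕ → S | ∃ t, ω t ∈ Acc ∧ ω (t+1) ∉ Acc} =
      ⋃ t : ℕ, {ω : ℕ → S | ω t ∈ Acc ∧ ω (t+1) ∉ Acc} := by
    ext ω; simp
  rw [hset]
  refine measure_iUnion_null fun t => ?_
  have hsub : {ω : ℕ → S | ω t ∈ Acc ∧ ω (t+1) ∉ Acc} ⊆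
      ⋃ x ∈ Finset.filter (fun x : Fin (t+2) → S =>
        x ⟨t, by omega⟩ ∈ Acc ∧ x ⟨t+1, by omega⟩ ∉ Acc) Finset.univ, Cyl (t+1) x := by
    intro ω hω
    simp only [Set.mem_iUnion, Finset.mem_filter, Finset.mem_univ, true_and]
    exact ⟨fun i => ω (i : ℕ), ⟨hω.1, hω.2⟩, fun i => rfl⟩
  refine le_antisymm (le_trans (measure_mono hsub) ?_) zero_le
  refine le_trans (measure_biUnion_finset_le _ _) ?_
  refine le_of_eq (Finset.sum_eq_zero fun x hx => ?_)
  rw [cyl_measure hν]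
  obtain ⟨-, h1, h2⟩ := Finset.mem_filter.1 hx
  have hzero : p (x (⟨t, Nat.lt_succ_self _⟩ : Fin (t+1)).castSucc)
      (x (⟨t, Nat.lt_succ_self _⟩ : Fin (t+1)).succ) = 0 := by
    have hc1 : (⟨t, Nat.lt_succ_self _⟩ : Fin (t+1)).castSucc = (⟨t, by omega⟩ : Fin (t+2)) :=
      Fin.ext rfl
    have hc2 : (⟨t, Nat.lt_succ_self _⟩ : Fin (t+1)).succ = (⟨t+1, by omega⟩ : Fin (t+2)) :=
      Fin.ext rfl
    rw [hc1, hc2]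
    by_contra hne
    exact h2 (habs _ h1 (PMF.mem_support_iff _ _ |>.2 hne))
  rw [Finset.prod_eq_zero (Finset.mem_univ (⟨t, Nat.lt_succ_self _⟩ : Fin (t+1))) hzero,
    mul_zero]

lemma ae_ok (hν : IsPathMeasure p ν) (habs : ∀ u ∈ Acc, (p u).support ⊆ Acc) (s : S) :
    ∀ᵐ ω ∂ ν s, (∀ t, ω t ∈ Acc → ω (t+1) ∈ Acc) ∧ ω 0 = s := by
  rw [ae_iff]
  have hsub : {ω : ℕ → S | ¬((∀ t, ω t ∈ Acc → ω (t+1) ∈ Acc) ∧ ω 0 = s)} ⊆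
      {ω : ℕ → S | ∃ t, ω t ∈ Acc ∧ ω (t+1) ∉ Acc} ∪ {ω : ℕ → S | ω 0 ≠ s} := by
    intro ω hω
    simp only [Set.mem_setOf_eq, not_and_or, not_forall] at hω
    rcases hω with h | h
    · left
      obtain ⟨t, ht⟩ := h
      exact ⟨t, by tauto⟩
    · right; exact h
  exact measure_mono_null hsub
    (measure_union_null (null_nonabs hν habs s) (null_start hν s))

lemma measurable_safe' : MeasurableSet {ω : ℕ → S | ∀ t, ω (t+1) ∉ Acc} := by
  have h : {ω : ℕ → S | ∀ t, ω (t+1) ∉ Acc} =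
      ⋂ t : ℕ, (fun ω : ℕ → S => ω (t+1)) ⁻¹' Accᶜ := by
    ext ω; simp
  rw [h]
  exact MeasurableSet.iInter fun t =>
    (measurable_pi_apply _) (Set.toFinite Acc).measurableSet.compl

lemma measurable_safe : MeasurableSet {ω : ℕ → S | ∀ t, ω t ∉ Acc} := by
  have h : {ω : ℕ → S | ∀ t, ω t ∉ Acc} =
      ⋂ t : ℕ, (fun ω : ℕ → S => ω t) ⁻¹' Accᶜ := by
    ext ω; simp
  rw [h]
  exact MeasurableSet.iInter fun t =>
    (measurable_pi_apply _) (Set.toFinite Acc).measurableSet.compl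

lemma measure_safe'_eq (hν : IsPathMeasure p ν) (habs : ∀ u ∈ Acc, (p u).support ⊆ Acc)
    (s : S) :
    ν s {ω : ℕ → S | ∀ t, ω (t+1) ∉ Acc} = ν s {ω : ℕ → S | ∀ t, ω t ∉ Acc} := by
  refine le_antisymm ?_ (measure_mono fun ω h => fun t => h (t+1))
  refine measure_mono_ae ((ae_ok hν habs s).mono fun ω hω hmem => ?_)
  intro t
  cases t with
  | zero =>
    intro h0
    exact hmem 0 (hω.1 0 h0)
  | succ t => exact hmem t

lemma ae_safe' (hν : IsPathMeasure p ν) (s : S)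
    (h : ν s {ω : ℕ → S | ∀ t, ω (t+1) ∉ Acc} = 1) :
    ∀ᵐ ω ∂ ν s, ∀ t, ω (t+1) ∉ Acc := by
  rw [ae_iff]
  have hmm := hν.1 s
  have : ν s {ω : ℕ → S | ∀ t, ω (t+1) ∉ Acc}ᶜ = 0 := by
    rw [prob_compl_eq_one_sub (measurable_safe' (Acc := Acc)), h, tsub_self]
  exact this

lemma ae_norm_Ret_le (hacc1 : 0 < γacc) (hacc2 : γacc < 1) (hγ1 : 0 < γ) (hγ2 : γ < 1)
    (hrn : rn < 0) (hν : IsPathMeasure p ν) (habs : ∀ u ∈ Acc, (p u).support ⊆ Acc)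
    (s : S) :
    ∀ᵐ ω ∂ ν s, ‖Ret Acc γacc γ rn ω‖ ≤ -rn := by
  refine (ae_ok hν habs s).mono fun ω hω => ?_
  by_cases hhit : ∃ t, ω (t+1) ∈ Acc
  · rw [Ret_hit hacc1 hacc2 ω hω.1 hhit, Real.norm_eq_abs, abs_mul, abs_of_nonpos hrn.le,
      abs_of_nonneg (pow_nonneg hγ1.le _)]
    calc -rn * γ ^ (Nat.find hhit) ≤ -rn * 1 :=
      mul_le_mul_of_nonneg_left (pow_le_one₀ hγ1.le hγ2.le) (by linarith)
    _ = -rn := mul_one _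
  · push_neg at hhit
    rw [Ret_safe ω hhit, norm_zero]
    linarith

lemma integrable_Ret (hacc1 : 0 < γacc) (hacc2 : γacc < 1) (hγ1 : 0 < γ) (hγ2 : γ < 1)
    (hrn : rn < 0) (hν : IsPathMeasure p ν) (habs : ∀ u ∈ Acc, (p u).support ⊆ Acc)
    (s : S) : Integrable (Ret Acc γacc γ rn) (ν s) := by
  have hmm := hν.1 s
  exact (integrable_const (-rn)).mono'
    ((measurable_Ret hacc1.le hacc2 hγ1.le hγ2).aestronglyMeasurable)
    (ae_norm_Ret_le hacc1 hacc2 hγ1 hγ2 hrn hν habs s)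

lemma intRet_nonpos (hacc1 : 0 < γacc) (hacc2 : γacc < 1) (hγ1 : 0 < γ) (hrn : rn < 0) (s : S) : (∫ ω, Ret Acc γacc γ rn ω ∂ ν s) ≤ 0 :=
  integral_nonpos (Ret_nonpos hacc1.le hacc2.le hγ1.le hrn)

lemma intRet_eq_zero (hν : IsPathMeasure p ν) (habs : ∀ u ∈ Acc, (p u).support ⊆ Acc)
    (s : S) (h : ν s {ω : ℕ → S | ∀ t, ω t ∉ Acc} = 1) :
    (∫ ω, Ret Acc γacc γ rn ω ∂ ν s) = 0 := by
  have h' : ν s {ω : ℕ → S | ∀ t, ω (t+1) ∉ Acc} = 1 := by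
    rw [measure_safe'_eq hν habs]; exact h
  rw [integral_congr_ae ((ae_safe' hν s h').mono fun ω hω => Ret_safe ω hω)]
  exact integral_zero _ _

lemma intRet_neg (hacc1 : 0 < γacc) (hacc2 : γacc < 1) (hγ1 : 0 < γ) (hγ2 : γ < 1)
    (hrn : rn < 0) (hν : IsPathMeasure p ν) (habs : ∀ u ∈ Acc, (p u).support ⊆ Acc)
    (s : S) (h : ν s {ω : ℕ → S | ∀ t, ω t ∉ Acc} < 1) :
    (∫ ω, Ret Acc γacc γ rn ω ∂ ν s) < 0 := by
  have hmm := hν.1 s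
  have hstay : (⨅ n, stay Acc p n s) < 1 := by
    rw [← safe_measure hν s]; exact h
  obtain ⟨n, hn⟩ := iInf_lt_iff.1 hstay
  set G : Set (ℕ → S) := {ω : ℕ → S | ∀ t ≤ n, ω t ∉ Acc}ᶜ with hG
  have hGmeas : MeasurableSet G := (measurable_safeSet Acc n).compl
  have hGpos : 0 < (ν s G).toReal := by
    rw [hG, prob_compl_eq_one_sub (measurable_safeSet Acc n), stay_measure hν s n]
    refine ENNReal.toReal_pos ?_ ?_
    · exact (tsub_pos_of_lt hn).ne'
    · exact ne_top_of_le_ne_top ENNReal.one_ne_top tsub_le_self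
  have hbound : ∀ᵐ ω ∂ ν s, Ret Acc γacc γ rn ω ≤
      G.indicator (fun _ => rn * γ ^ n) ω := by
    refine (ae_ok hν habs s).mono fun ω hω => ?_
    by_cases hmem : ω ∈ G
    · rw [Set.indicator_of_mem hmem]
      have hex : ∃ t ≤ n, ω t ∈ Acc := by
        rw [hG] at hmem
        simpa using hmem
      have hhit : ∃ t, ω (t+1) ∈ Acc := by
        obtain ⟨t, htn, hta⟩ := hex
        cases t with
        | zero => exact ⟨0, hω.1 0 hta⟩
        | succ t => exact ⟨t, hta⟩
      have hfind : Nat.find hhit ≤ n := by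
        obtain ⟨t, htn, hta⟩ := hex
        cases t with
        | zero => exact Nat.find_le (hω.1 0 hta) |>.trans (Nat.zero_le n)
        | succ t => exact (Nat.find_le hta).trans (by omega)
      rw [Ret_hit hacc1 hacc2 ω hω.1 hhit]
      have := pow_le_pow_of_le_one hγ1.le hγ2.le hfind
      nlinarith [pow_nonneg hγ1.le (Nat.find hhit), pow_nonneg hγ1.le n]
    · rw [Set.indicator_of_notMem hmem]
      exact Ret_nonpos hacc1.le hacc2.le hγ1.le hrn ω
  have hint : (∫ ω, Ret Acc γacc γ rn ω ∂ ν s) ≤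
      ∫ ω, G.indicator (fun _ => rn * γ ^ n) ω ∂ ν s := by
    refine integral_mono_ae (integrable_Ret hacc1 hacc2 hγ1 hγ2 hrn hν habs s) ?_ hbound
    exact (integrable_const _).indicator hGmeas
  rw [integral_indicator_const _ hGmeas, smul_eq_mul] at hint
  refine lt_of_le_of_lt hint ?_
  exact mul_neg_of_pos_of_neg hGpos
    (mul_neg_of_neg_of_pos hrn (pow_pos hγ1 n))

lemma intRet_tendsto (hacc1 : 0 < γacc) (hacc2 : γacc < 1) (hrn : rn < 0)
    (hν : IsPathMeasure p ν) (habs : ∀ u ∈ Acc, (p u).support ⊆ Acc) (s : S) :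
    Tendsto (fun γ : ℝ => ∫ ω, Ret Acc γacc γ rn ω ∂ ν s) (𝓝[<] (1:ℝ))
      (𝓝 (rn * (1 - (ν s {ω : ℕ → S | ∀ t, ω t ∉ Acc}).toReal))) := by
  have hmm := hν.1 s
  have hev : Set.Ioo (0:ℝ) 1 ∈ 𝓝[<] (1:ℝ) :=
    Ioo_mem_nhdsLT_of_mem (by constructor <;> norm_num)
  have hlim := MeasureTheory.tendsto_integral_filter_of_dominated_convergence
    (μ := ν s) (l := 𝓝[<] (1:ℝ)) (F := fun γ ω => Ret Acc γacc γ rn ω)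
    (f := fun ω => Set.indicator {ω : ℕ → S | ∀ t, ω (t+1) ∉ Acc}ᶜ (fun _ => rn) ω)
    (bound := fun _ => -rn)
    ?_ ?_ (integrable_const _) ?_
  · have hval : (∫ ω, Set.indicator {ω : ℕ → S | ∀ t, ω (t+1) ∉ Acc}ᶜ
        (fun _ => rn) ω ∂ ν s)
        = rn * (1 - (ν s {ω : ℕ → S | ∀ t, ω t ∉ Acc}).toReal) := by
      rw [integral_indicator_const _ (measurable_safe' (Acc := Acc)).compl, smul_eq_mul, measureReal_def,
        prob_compl_eq_one_sub (measurable_safe' (Acc := Acc)),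
        measure_safe'_eq hν habs s]
      have hle : ν s {ω : ℕ → S | ∀ t, ω t ∉ Acc} ≤ 1 := prob_le_one
      rw [ENNReal.toReal_sub_of_le hle ENNReal.one_ne_top, ENNReal.toReal_one]
      ring
    rw [hval] at hlim
    exact hlim
  · refine Filter.eventually_of_mem hev fun γ hγ => ?_
    exact (measurable_Ret hacc1.le hacc2 hγ.1.le hγ.2).aestronglyMeasurable
  · exact Filter.eventually_of_mem hev
      fun γ hγ => ae_norm_Ret_le hacc1 hacc2 hγ.1 hγ.2 hrn hν habs s
  · refine (ae_ok hν habs s).mono fun ω hω => ?_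
    by_cases hhit : ∃ t, ω (t+1) ∈ Acc
    · have heq : (fun γ : ℝ => Ret Acc γacc γ rn ω) =
          fun γ : ℝ => rn * γ ^ (Nat.find hhit) :=
        funext fun γ => Ret_hit hacc1 hacc2 ω hω.1 hhit
      rw [heq]
      have hind : Set.indicator {ω : ℕ → S | ∀ t, ω (t+1) ∉ Acc}ᶜ (fun _ => rn) ω = rn :=
        Set.indicator_of_mem (by simpa using hhit) _
      beta_reduce
      rw [hind]
      have hc : Tendsto (fun γ : ℝ => rn * γ ^ (Nat.find hhit)) (𝓝 (1:ℝ))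
          (𝓝 (rn * 1 ^ (Nat.find hhit))) := by
        exact (continuous_const.mul (continuous_pow _)).tendsto 1
      simpa using hc.mono_left nhdsWithin_le_nhds
    · push_neg at hhit
      have heq : (fun γ : ℝ => Ret Acc γacc γ rn ω) = fun _ => 0 :=
        funext fun γ => Ret_safe ω hhit
      rw [heq]
      have hind : Set.indicator {ω : ℕ → S | ∀ t, ω (t+1) ∉ Acc}ᶜ (fun _ => rn) ω = 0 :=
        Set.indicator_of_notMem (by simpa using hhit) _
      beta_reduce
      rw [hind]
      exact tendsto_const_nhds

end meas

lemma real_iSup_exists_max {ι : Type*} [Finite ι] [Nonempty ι] (f : ι → ℝ) :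
    ∃ i0, (⨆ i, f i) = f i0 ∧ ∀ i, f i ≤ f i0 := by
  obtain ⟨i0, hi0⟩ := Finite.exists_max f
  exact ⟨i0, le_antisymm (ciSup_le hi0) (le_ciSup (Set.finite_range f).bddAbove i0), hi0⟩

lemma tendsto_real_iSup {ι : Type*} [Finite ι] [Nonempty ι] {κ : Type*} {l : Filter κ}
    (f : ι → κ → ℝ) (L : ι → ℝ) (h : ∀ i, Tendsto (f i) l (𝓝 (L i))) :
    Tendsto (fun x => ⨆ i, f i x) l (𝓝 (⨆ i, L i)) := by
  classical
  cases nonempty_fintype ι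
  have key : ∀ (t : Finset ι) (ht : t.Nonempty),
      Tendsto (fun x => t.sup' ht (fun i => f i x)) l (𝓝 (t.sup' ht L)) := by
    intro t ht
    induction ht using Finset.Nonempty.cons_induction with
    | singleton a => simpa using h a
    | cons a t hat htne ih =>
      rw [show (fun x => (Finset.cons a t hat).sup' (Finset.cons_nonempty hat) fun i => f i x) =
        fun x => f a x ⊔ (t.sup' htne fun i => f i x) from
          funext fun x => Finset.sup'_cons htne _, Finset.sup'_cons htne]
      exact (h a).max ih
  have huniv : (Finset.univ : Finset ι).Nonempty := Finset.univ_nonempty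
  have h1 := key Finset.univ huniv
  have heq : ∀ (g : ι → ℝ), Finset.univ.sup' huniv g = ⨆ i, g i := fun g =>
    le_antisymm (Finset.sup'_le _ _ fun i _ => le_ciSup (Set.finite_range g).bddAbove i)
      (ciSup_le fun i => Finset.le_sup' g (Finset.mem_univ i))
  have h2 : (fun x => Finset.univ.sup' huniv (fun i => f i x)) = fun x => ⨆ i, f i x :=
    funext fun x => heq _
  rw [h2, heq] at h1
  exact h1

section policy

variable {A : S → Type*} [∀ s, Fintype (A s)] [∀ s, Nonempty (A s)]
variable {P : (s : S) → A s → PMF S} {Acc : Set S}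
variable {μ : ((s : S) → A s) → S → Measure (ℕ → S)}
variable {γacc γ rn : ℝ}

lemma habsP (habs : ∀ s ∈ Acc, ∀ a : A s, (P s a).support ⊆ Acc) (π : (s : S) → A s) :
    ∀ u ∈ Acc, ((fun s => P s (π s)) u).support ⊆ Acc := fun u hu => habs u hu (π u)

lemma spE_eq (hμ : ∀ π : (s : S) → A s, IsPathMeasure (fun s => P s (π s)) (μ π))
    (π : (s : S) → A s) (s : S) :
    μ π s {ω : ℕ → S | ∀ t, ω t ∉ Acc} = ⨅ n, stay Acc (fun s => P s (π s)) n s :=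
  safe_measure (hμ π) s

lemma spE_acc (hμ : ∀ π : (s : S) → A s, IsPathMeasure (fun s => P s (π s)) (μ π))
    (π : (s : S) → A s) {s : S} (hs : s ∈ Acc) :
    μ π s {ω : ℕ → S | ∀ t, ω t ∉ Acc} = 0 := by
  refine measure_mono_null (fun ω hω => ?_) (null_start (hμ π) s)
  intro h0
  exact hω 0 (by rw [h0]; exact hs)

lemma vE_eq (hμ : ∀ π : (s : S) → A s, IsPathMeasure (fun s => P s (π s)) (μ π)) (s : S) :
    (⨆ π : (s' : S) → A s', μ π s {ω : ℕ → S | ∀ t, ω t ∉ Acc}) = uInf Acc P s := by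
  rw [uInf_eq_sup_spE]
  exact iSup_congr fun π => spE_eq hμ π s

lemma exists_uniform (hμ : ∀ π : (s : S) → A s, IsPathMeasure (fun s => P s (π s)) (μ π)) :
    ∃ π : (s : S) → A s, ∀ s, μ π s {ω : ℕ → S | ∀ t, ω t ∉ Acc} = uInf Acc P s := by
  obtain ⟨π, hπ⟩ := exists_greedy Acc P
  refine ⟨π, fun s => ?_⟩
  rw [spE_eq hμ π s]
  exact le_antisymm (spE_le_uInf Acc P π s)
    (le_iInf fun n => uInf_le_stay_greedy Acc P π hπ n s)

lemma win_iff (hμ : ∀ π : (s : S) → A s, IsPathMeasure (fun s => P s (π s)) (μ π)) (s : S) :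
    s ∈ WinRegion Acc μ ↔ uInf Acc P s = 1 := by
  constructor
  · rintro ⟨π, hπ⟩
    refine le_antisymm (uInf_le_one Acc P s) ?_
    rw [← hπ, spE_eq hμ π s]
    exact spE_le_uInf Acc P π s
  · intro h
    obtain ⟨π, hπ⟩ := exists_uniform hμ
    exact ⟨π, by rw [hπ s, h]⟩

lemma win_not_acc (hμ : ∀ π : (s : S) → A s, IsPathMeasure (fun s => P s (π s)) (μ π))
    {s : S} (hs : s ∈ Acc) : s ∉ WinRegion Acc μ := by
  rintro ⟨π, hπ⟩
  exact zero_ne_one ((spE_acc hμ π hs).symm.trans hπ)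

lemma Valp_nonpos (hacc1 : 0 < γacc) (hacc2 : γacc < 1) (hγ1 : 0 < γ) (hrn : rn < 0)
    (π : (s : S) → A s) (s : S) : Valp Acc γacc γ rn μ π s ≤ 0 :=
  intRet_nonpos hacc1 hacc2 hγ1 hrn s

lemma Valp_eq_zero_iff (hacc1 : 0 < γacc) (hacc2 : γacc < 1) (hγ1 : 0 < γ) (hγ2 : γ < 1)
    (hrn : rn < 0)
    (hμ : ∀ π : (s : S) → A s, IsPathMeasure (fun s => P s (π s)) (μ π))
    (habs : ∀ s ∈ Acc, ∀ a : A s, (P s a).support ⊆ Acc)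
    (π : (s : S) → A s) (s : S) :
    Valp Acc γacc γ rn μ π s = 0 ↔ μ π s {ω : ℕ → S | ∀ t, ω t ∉ Acc} = 1 := by
  constructor
  · intro h
    by_contra hne
    have hmm := (hμ π).1 s
    have hlt : μ π s {ω : ℕ → S | ∀ t, ω t ∉ Acc} < 1 := lt_of_le_of_ne prob_le_one hne
    exact absurd h
      (ne_of_lt (intRet_neg hacc1 hacc2 hγ1 hγ2 hrn (hμ π) (habsP habs π) s hlt))
  · intro h
    exact intRet_eq_zero (hμ π) (habsP habs π) s h

lemma Qp_term_nonpos (hacc1 : 0 < γacc) (hacc2 : γacc < 1) (hγ1 : 0 < γ) (hrn : rn < 0)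
    (π : (s : S) → A s) (s s' : S) (a : A s) :
    (P s a s').toReal * (Rw Acc γacc rn s' + Γw Acc γacc γ s' * Valp Acc γacc γ rn μ π s') ≤ 0 := by
  refine mul_nonpos_of_nonneg_of_nonpos ENNReal.toReal_nonneg ?_
  refine add_nonpos (Rw_nonpos hacc2.le hrn s') ?_
  exact mul_nonpos_of_nonneg_of_nonpos (Γw_nonneg hacc1.le hγ1.le s')
    (Valp_nonpos hacc1 hacc2 hγ1 hrn π s')

lemma Qp_nonpos (hacc1 : 0 < γacc) (hacc2 : γacc < 1) (hγ1 : 0 < γ) (hrn : rn < 0)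
    (π : (s : S) → A s) (s : S) (a : A s) :
    Qp P Acc γacc γ rn μ π s a ≤ 0 :=
  Finset.sum_nonpos fun s' _ => Qp_term_nonpos hacc1 hacc2 hγ1 hrn π s s' a

lemma Qstar_nonpos (hacc1 : 0 < γacc) (hacc2 : γacc < 1) (hγ1 : 0 < γ) (hrn : rn < 0)
    (s : S) (a : A s) : Qstar P Acc γacc γ rn μ s a ≤ 0 :=
  ciSup_le fun π => Qp_nonpos hacc1 hacc2 hγ1 hrn π s a

lemma Qstar_exists_max (s : S) (a : A s) :
    ∃ π : (s' : S) → A s', Qstar P Acc γacc γ rn μ s a = Qp P Acc γacc γ rn μ π s a ∧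
      ∀ π', Qp P Acc γacc γ rn μ π' s a ≤ Qp P Acc γacc γ rn μ π s a :=
  real_iSup_exists_max _

lemma Qstar_eq_zero_iff (hacc1 : 0 < γacc) (hacc2 : γacc < 1) (hγ1 : 0 < γ) (hγ2 : γ < 1)
    (hrn : rn < 0)
    (hμ : ∀ π : (s : S) → A s, IsPathMeasure (fun s => P s (π s)) (μ π))
    (habs : ∀ s ∈ Acc, ∀ a : A s, (P s a).support ⊆ Acc)
    (s : S) (a : A s) :
    Qstar P Acc γacc γ rn μ s a = 0 ↔ (P s a).support ⊆ WinRegion Acc μ := by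
  constructor
  · intro h
    obtain ⟨π, hπ, hmax⟩ := Qstar_exists_max (μ := μ) s a
    rw [h] at hπ
    have hterm : ∀ s' ∈ Finset.univ, (P s a s').toReal *
        (Rw Acc γacc rn s' + Γw Acc γacc γ s' * Valp Acc γacc γ rn μ π s') = 0 := by
      rw [Qp] at hπ
      exact (Finset.sum_eq_zero_iff_of_nonpos
        (fun s' _ => Qp_term_nonpos hacc1 hacc2 hγ1 hrn π s s' a)).1 hπ.symm
    intro s' hs'
    have hne : (P s a s').toReal ≠ 0 := by
      refine ENNReal.toReal_ne_zero.2 ⟨hs', ?_⟩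
      exact ne_top_of_le_ne_top ENNReal.one_ne_top ((P s a).coe_le_one s')
    have hzero : Rw Acc γacc rn s' + Γw Acc γacc γ s' * Valp Acc γacc γ rn μ π s' = 0 := by
      rcases mul_eq_zero.1 (hterm s' (Finset.mem_univ s')) with h' | h'
      · exact absurd h' hne
      · exact h'
    have hb1 : Rw Acc γacc rn s' ≤ 0 := Rw_nonpos hacc2.le hrn s'
    have hb2 : Γw Acc γacc γ s' * Valp Acc γacc γ rn μ π s' ≤ 0 :=
      mul_nonpos_of_nonneg_of_nonpos (Γw_nonneg hacc1.le hγ1.le s')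
        (Valp_nonpos hacc1 hacc2 hγ1 hrn π s')
    have hRw : Rw Acc γacc rn s' = 0 ∧ Γw Acc γacc γ s' * Valp Acc γacc γ rn μ π s' = 0 := by
      constructor <;> linarith
    have hsnacc : s' ∉ Acc := by
      intro hmem
      rw [Rw, if_pos hmem] at hRw
      have := hRw.1
      nlinarith [hrn, hacc2]
    have hval : Valp Acc γacc γ rn μ π s' = 0 := by
      have hγw : Γw Acc γacc γ s' = γ := by rw [Γw, if_neg hsnacc]
      have := hRw.2
      rw [hγw] at this
      rcases mul_eq_zero.1 this with h' | h'
      · exact absurd h' hγ1.ne'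
      · exact h'
    exact ⟨π, (Valp_eq_zero_iff hacc1 hacc2 hγ1 hγ2 hrn hμ habs π s').1 hval⟩
  · intro hsupp
    obtain ⟨πw, hπw⟩ := exists_uniform hμ
    have hQp : Qp P Acc γacc γ rn μ πw s a = 0 := by
      rw [Qp]
      refine Finset.sum_eq_zero fun s' _ => ?_
      by_cases hs' : P s a s' = 0
      · rw [hs', ENNReal.toReal_zero, zero_mul]
      · have hwin : s' ∈ WinRegion Acc μ := hsupp hs'
        have hnacc : s' ∉ Acc := fun hmem => win_not_acc hμ hmem hwin
        have hval : Valp Acc γacc γ rn μ πw s' = 0 := by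
          refine (Valp_eq_zero_iff hacc1 hacc2 hγ1 hγ2 hrn hμ habs πw s').2 ?_
          rw [hπw s', (win_iff hμ s').1 hwin]
        rw [Rw, if_neg hnacc, hval, mul_zero, add_zero, mul_zero]
    refine le_antisymm (Qstar_nonpos hacc1 hacc2 hγ1 hrn s a) ?_
    rw [Qstar, ← hQp]
    exact le_ciSup (Set.finite_range (fun π' : (s' : S) → A s' =>
      Qp P Acc γacc γ rn μ π' s a)).bddAbove πw

lemma pmf_toReal_sum (q : PMF S) : ∑ s', (q s').toReal = 1 := by
  rw [← ENNReal.toReal_sum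
    (fun s' _ => ne_top_of_le_ne_top ENNReal.one_ne_top (q.coe_le_one s'))]
  rw [pmf_sum_eq_one, ENNReal.toReal_one]

lemma Valp_tendsto (hacc1 : 0 < γacc) (hacc2 : γacc < 1) (hrn : rn < 0)
    (hμ : ∀ π : (s : S) → A s, IsPathMeasure (fun s => P s (π s)) (μ π))
    (habs : ∀ s ∈ Acc, ∀ a : A s, (P s a).support ⊆ Acc)
    (π : (s : S) → A s) (s : S) :
    Tendsto (fun γ : ℝ => Valp Acc γacc γ rn μ π s) (𝓝[<] (1:ℝ))
      (𝓝 (rn * (1 - (μ π s {ω : ℕ → S | ∀ t, ω t ∉ Acc}).toReal))) :=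
  intRet_tendsto hacc1 hacc2 hrn (hμ π) (habsP habs π) s

lemma Qp_tendsto (hacc1 : 0 < γacc) (hacc2 : γacc < 1) (hrn : rn < 0)
    (hμ : ∀ π : (s : S) → A s, IsPathMeasure (fun s => P s (π s)) (μ π))
    (habs : ∀ s ∈ Acc, ∀ a : A s, (P s a).support ⊆ Acc)
    (π : (s : S) → A s) (s : S) (a : A s) :
    Tendsto (fun γ : ℝ => Qp P Acc γacc γ rn μ π s a) (𝓝[<] (1:ℝ))
      (𝓝 (rn * (1 - ∑ s', (P s a s').toReal *
        (μ π s' {ω : ℕ → S | ∀ t, ω t ∉ Acc}).toReal))) := by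
  have hterm : ∀ s' : S, Tendsto (fun γ : ℝ => (P s a s').toReal *
      (Rw Acc γacc rn s' + Γw Acc γacc γ s' * Valp Acc γacc γ rn μ π s'))
      (𝓝[<] (1:ℝ))
      (𝓝 ((P s a s').toReal *
        (rn * (1 - (μ π s' {ω : ℕ → S | ∀ t, ω t ∉ Acc}).toReal)))) := by
    intro s'
    have hv := Valp_tendsto hacc1 hacc2 hrn hμ habs π s'
    by_cases hs' : s' ∈ Acc
    · have hsp : (μ π s' {ω : ℕ → S | ∀ t, ω t ∉ Acc}).toReal = 0 := by
        rw [spE_acc hμ π hs', ENNReal.toReal_zero]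
      have hγw : ∀ γ : ℝ, Γw Acc γacc γ s' = γacc := fun γ => if_pos hs'
      have h1 : Tendsto (fun γ : ℝ => Rw Acc γacc rn s' +
          Γw Acc γacc γ s' * Valp Acc γacc γ rn μ π s') (𝓝[<] (1:ℝ))
          (𝓝 (Rw Acc γacc rn s' + γacc *
            (rn * (1 - (μ π s' {ω : ℕ → S | ∀ t, ω t ∉ Acc}).toReal)))) := by
        simp only [hγw]
        exact tendsto_const_nhds.add (hv.const_mul γacc)
      have h2 := h1.const_mul ((P s a s').toReal)
      have hval : (P s a s').toReal *
          (rn * (1 - (μ π s' {ω : ℕ → S | ∀ t, ω t ∉ Acc}).toReal)) =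
          (P s a s').toReal * (Rw Acc γacc rn s' + γacc *
            (rn * (1 - (μ π s' {ω : ℕ → S | ∀ t, ω t ∉ Acc}).toReal))) := by
        rw [hsp, Rw, if_pos hs']
        ring
      rw [hval]
      exact h2
    · have hγw : ∀ γ : ℝ, Γw Acc γacc γ s' = γ := fun γ => if_neg hs'
      have hγid : Tendsto (fun γ : ℝ => γ) (𝓝[<] (1:ℝ)) (𝓝 (1:ℝ)) :=
        (continuous_id.tendsto 1).mono_left nhdsWithin_le_nhds
      have h1 : Tendsto (fun γ : ℝ => Rw Acc γacc rn s' +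
          Γw Acc γacc γ s' * Valp Acc γacc γ rn μ π s') (𝓝[<] (1:ℝ))
          (𝓝 (Rw Acc γacc rn s' + 1 *
            (rn * (1 - (μ π s' {ω : ℕ → S | ∀ t, ω t ∉ Acc}).toReal)))) := by
        simp only [hγw]
        exact tendsto_const_nhds.add (hγid.mul hv)
      have h2 := h1.const_mul ((P s a s').toReal)
      have hval : (P s a s').toReal *
          (rn * (1 - (μ π s' {ω : ℕ → S | ∀ t, ω t ∉ Acc}).toReal)) =
          (P s a s').toReal * (Rw Acc γacc rn s' + 1 *
            (rn * (1 - (μ π s' {ω : ℕ → S | ∀ t, ω t ∉ Acc}).toReal))) := by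
        rw [Rw, if_neg hs']
        ring
      rw [hval]
      exact h2
  have hsum := tendsto_finset_sum Finset.univ (fun s' (_ : s' ∈ Finset.univ) => hterm s')
  have halg : ∑ s', (P s a s').toReal *
      (rn * (1 - (μ π s' {ω : ℕ → S | ∀ t, ω t ∉ Acc}).toReal)) =
      rn * (1 - ∑ s', (P s a s').toReal *
        (μ π s' {ω : ℕ → S | ∀ t, ω t ∉ Acc}).toReal) := by
    have h1 : ∑ s' : S, (P s a s').toReal = 1 := pmf_toReal_sum _
    calc ∑ s', (P s a s').toReal *
        (rn * (1 - (μ π s' {ω : ℕ → S | ∀ t, ω t ∉ Acc}).toReal))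
        = ∑ s', ((P s a s').toReal * rn - rn * ((P s a s').toReal *
            (μ π s' {ω : ℕ → S | ∀ t, ω t ∉ Acc}).toReal)) :=
          Finset.sum_congr rfl fun s' _ => by ring
      _ = (∑ s', (P s a s').toReal) * rn - rn * ∑ s', (P s a s').toReal *
            (μ π s' {ω : ℕ → S | ∀ t, ω t ∉ Acc}).toReal := by
          rw [Finset.sum_sub_distrib, ← Finset.sum_mul, ← Finset.mul_sum]
      _ = rn * (1 - ∑ s', (P s a s').toReal *
            (μ π s' {ω : ℕ → S | ∀ t, ω t ∉ Acc}).toReal) := by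
          rw [h1]; ring
  rw [halg] at hsum
  exact hsum

noncomputable def LLim (P : (s : S) → A s → PMF S) (Acc : Set S)
    (μ : ((s : S) → A s) → S → Measure (ℕ → S)) (rn : ℝ) (s : S) (a : A s) : ℝ :=
  ⨆ π : (s' : S) → A s', rn * (1 - ∑ s', (P s a s').toReal *
    (μ π s' {ω : ℕ → S | ∀ t, ω t ∉ Acc}).toReal)

lemma Qstar_tendsto (hacc1 : 0 < γacc) (hacc2 : γacc < 1) (hrn : rn < 0)
    (hμ : ∀ π : (s : S) → A s, IsPathMeasure (fun s => P s (π s)) (μ π))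
    (habs : ∀ s ∈ Acc, ∀ a : A s, (P s a).support ⊆ Acc)
    (s : S) (a : A s) :
    Tendsto (fun γ : ℝ => Qstar P Acc γacc γ rn μ s a) (𝓝[<] (1:ℝ))
      (𝓝 (LLim P Acc μ rn s a)) := by
  have := tendsto_real_iSup (fun (π : (s' : S) → A s') (γ : ℝ) =>
    Qp P Acc γacc γ rn μ π s a) _ (fun π => Qp_tendsto hacc1 hacc2 hrn hμ habs π s a)
  exact this

lemma LLim_eq (hrn : rn < 0)
    (hμ : ∀ π : (s : S) → A s, IsPathMeasure (fun s => P s (π s)) (μ π))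
    (s : S) (a : A s) :
    LLim P Acc μ rn s a =
      rn * (1 - ∑ s', (P s a s').toReal * (uInf Acc P s').toReal) := by
  obtain ⟨πw, hπw⟩ := exists_uniform hμ
  refine le_antisymm (ciSup_le fun π => ?_) ?_
  · have hle : ∑ s', (P s a s').toReal *
        (μ π s' {ω : ℕ → S | ∀ t, ω t ∉ Acc}).toReal ≤
        ∑ s', (P s a s').toReal * (uInf Acc P s').toReal := by
      refine Finset.sum_le_sum fun s' _ => ?_
      refine mul_le_mul_of_nonneg_left ?_ ENNReal.toReal_nonneg
      refine ENNReal.toReal_mono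
        (ne_top_of_le_ne_top ENNReal.one_ne_top (uInf_le_one Acc P s')) ?_
      rw [spE_eq hμ π s']
      exact spE_le_uInf Acc P π s'
    nlinarith
  · have heq : ∑ s', (P s a s').toReal *
        (μ πw s' {ω : ℕ → S | ∀ t, ω t ∉ Acc}).toReal =
        ∑ s', (P s a s').toReal * (uInf Acc P s').toReal :=
      Finset.sum_congr rfl fun s' _ => by rw [hπw s']
    rw [← heq]
    exact le_ciSup (Set.finite_range (fun π : (s' : S) → A s' =>
      rn * (1 - ∑ s', (P s a s').toReal *
        (μ π s' {ω : ℕ → S | ∀ t, ω t ∉ Acc}).toReal))).bddAbove πw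

end policy

end SVP

open SVP

/-- for `γ` close enough to 1, the Markov chain induced by the permissive
supervisor attains the maximum probability of satisfying the safety condition at every
state. -/
theorem supervisor_kernel_attains_max_safety_prob
    [Fintype S] [Nonempty S] [MeasurableSpace S] [MeasurableSingletonClass S]
    [∀ s, Fintype (A s)] [∀ s, Nonempty (A s)]
    (P : (s : S) → A s → PMF S) (Acc : Set S)
    (habs : ∀ s ∈ Acc, ∀ a : A s, (P s a).support ⊆ Acc)
    (μ : ((s : S) → A s) → S → Measure (ℕ → S))
    (hμ : ∀ π : (s : S) → A s, IsPathMeasure (fun s => P s (π s)) (μ π))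
    (rn γacc : ℝ) (hrn : rn < 0) (hγacc : 0 < γacc ∧ γacc < 1) :
    ∃ γ' : ℝ, 0 < γ' ∧ γ' < 1 ∧ ∀ γ : ℝ, γ' < γ → γ < 1 →
      ∀ (κ : S → PMF S) (μκ : S → Measure (ℕ → S)), IsPathMeasure κ μκ →
        (∀ s ∈ WinRegion Acc μ, (κ s).support ⊆
            ⋃ a ∈ {a : A s | Qstar P Acc γacc γ rn μ s a = 0}, (P s a).support) →
        (∀ s ∉ WinRegion Acc μ, ∃ a : A s,
            (∀ a' : A s, Qstar P Acc γacc γ rn μ s a' ≤ Qstar P Acc γacc γ rn μ s a) ∧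
              κ s = P s a) →
        ∀ s : S, μκ s {ω | ∀ t, ω t ∉ Acc} =
          ⨆ π : (s' : S) → A s', μ π s {ω | ∀ t, ω t ∉ Acc} := by
  classical
  obtain ⟨hacc1, hacc2⟩ := hγacc
  have hE1 : ∀ (i : Σ s : S, A s × A s), ∀ᶠ γ : ℝ in 𝓝[<] (1:ℝ),
      (LLim P Acc μ rn i.1 i.2.1 < LLim P Acc μ rn i.1 i.2.2 →
        Qstar P Acc γacc γ rn μ i.1 i.2.1 < Qstar P Acc γacc γ rn μ i.1 i.2.2) := by
    intro i
    by_cases h : LLim P Acc μ rn i.1 i.2.1 < LLim P Acc μ rn i.1 i.2.2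
    · exact ((Qstar_tendsto hacc1 hacc2 hrn hμ habs i.1 i.2.1).eventually_lt
        (Qstar_tendsto hacc1 hacc2 hrn hμ habs i.1 i.2.2) h).mono fun γ hγ _ => hγ
    · exact Filter.Eventually.of_forall fun γ hh => absurd hh h
  have hEall : ∀ᶠ γ : ℝ in 𝓝[<] (1:ℝ), ∀ i : Σ s : S, A s × A s,
      (LLim P Acc μ rn i.1 i.2.1 < LLim P Acc μ rn i.1 i.2.2 →
        Qstar P Acc γacc γ rn μ i.1 i.2.1 < Qstar P Acc γacc γ rn μ i.1 i.2.2) :=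
    Filter.eventually_all.2 hE1
  have hEoo : ∀ᶠ γ : ℝ in 𝓝[<] (1:ℝ), γ ∈ Set.Ioo (0:ℝ) 1 :=
    Filter.eventually_of_mem (Ioo_mem_nhdsLT_of_mem (by constructor <;> norm_num))
      (fun _ h => h)
  have hEv := hEall.and hEoo
  rw [Filter.eventually_iff, mem_nhdsLT_iff_exists_Ioo_subset] at hEv
  obtain ⟨l, hl, hsub⟩ := hEv
  refine ⟨max l (1/2), lt_of_lt_of_le (by norm_num) (le_max_right _ _),
    max_lt hl (by norm_num), ?_⟩
  intro γ hγl hγ1 κ μκ hμκ hWsupp hOut s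
  have hmem : γ ∈ Set.Ioo l 1 := ⟨(le_max_left l _).trans_lt hγl, hγ1⟩
  obtain ⟨hprop, hγIoo⟩ := hsub hmem
  have hγ0 : 0 < γ := hγIoo.1
  -- kernel absorbing
  have hκabs : ∀ u ∈ Acc, (κ u).support ⊆ Acc := by
    intro u hu
    obtain ⟨a, -, hEq⟩ := hOut u (win_not_acc hμ hu)
    rw [hEq]
    exact habs u hu a
  rw [safe_measure hμκ s, vE_eq hμ s]
  -- facts
  have hsupp : ∀ u, u ∈ WinRegion Acc μ → (κ u).support ⊆ WinRegion Acc μ := by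
    intro u hu s' hs'
    have := hWsupp u hu hs'
    simp only [Set.mem_iUnion] at this
    obtain ⟨a, ha0, hmem2⟩ := this
    exact (Qstar_eq_zero_iff hacc1 hacc2 hγ0 hγ1 hrn hμ habs u a).1 ha0 hmem2
  have hW1 : ∀ u ∈ WinRegion Acc μ, uInf Acc P u = 1 := fun u hu => (win_iff hμ u).1 hu
  have hBBmax : ∀ u, ∀ (a : A u),
      (∀ a', Qstar P Acc γacc γ rn μ u a' ≤ Qstar P Acc γacc γ rn μ u a) →
      ∀ a', ∑ s', (P u a' s').toReal * (uInf Acc P s').toReal ≤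
        ∑ s', (P u a s').toReal * (uInf Acc P s').toReal := by
    intro u a hmax a'
    by_contra hlt
    push_neg at hlt
    have hLL : LLim P Acc μ rn u a < LLim P Acc μ rn u a' := by
      rw [LLim_eq hrn hμ, LLim_eq hrn hμ]
      nlinarith
    exact absurd (hprop ⟨u, a, a'⟩ hLL) (not_lt.2 (hmax a'))
  have hfin : ∀ (u : S) (b : A u), (∑ s', P u b s' * uInf Acc P s') ≠ ⊤ := by
    intro u b
    refine (lt_of_le_of_lt ?_ ENNReal.one_lt_top).ne
    calc ∑ s', P u b s' * uInf Acc P s' ≤ ∑ s', P u b s' * 1 :=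
      Finset.sum_le_sum fun s' _ => mul_le_mul_right (uInf_le_one Acc P s') _
    _ = 1 := by simp [pmf_sum_eq_one]
  have htom : ∀ (u : S) (b : A u), (∑ s', P u b s' * uInf Acc P s').toReal =
      ∑ s', (P u b s').toReal * (uInf Acc P s').toReal := by
    intro u b
    rw [ENNReal.toReal_sum (fun s' _ => ENNReal.mul_ne_top
      (ne_top_of_le_ne_top ENNReal.one_ne_top ((P u b).coe_le_one s'))
      (ne_top_of_le_ne_top ENNReal.one_ne_top (uInf_le_one Acc P s')))]
    exact Finset.sum_congr rfl fun s' _ => ENNReal.toReal_mul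
  have hfix : ∀ u, u ∉ WinRegion Acc μ → u ∉ Acc →
      (∑ s', κ u s' * uInf Acc P s') = uInf Acc P u := by
    intro u hu hunacc
    obtain ⟨a, hamax, hκa⟩ := hOut u hu
    have hENNle : ∀ b : A u, ∑ s', P u b s' * uInf Acc P s' ≤
        ∑ s', P u a s' * uInf Acc P s' := by
      intro b
      have hr := hBBmax u a hamax b
      rw [← htom u a, ← htom u b] at hr
      exact (ENNReal.toReal_le_toReal (hfin u b) (hfin u a)).1 hr
    have hsupr : (⨆ b : A u, ∑ s', P u b s' * uInf Acc P s') =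
        ∑ s', P u a s' * uInf Acc P s' :=
      le_antisymm (iSup_le hENNle)
        (le_iSup (fun b : A u => ∑ s', P u b s' * uInf Acc P s') a)
    rw [hκa, ← uInf_fixed Acc P u]
    simp only [TT, if_neg hunacc]
    exact hsupr.symm
  have hstayuB : ∀ n u, stay Acc κ n u ≤ uB Acc P n u := by
    intro n
    induction n with
    | zero => intro u; simp only [stay, uB]; split <;> simp
    | succ n ih =>
      intro u
      simp only [stay]
      split
      · exact zero_le
      · rename_i hunacc
        by_cases huW : u ∈ WinRegion Acc μ
        · have h1 : uB Acc P (n+1) u = 1 := by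
            refine le_antisymm (uB_le_one Acc P (n+1) u) ?_
            calc (1:ℝ≥0∞) = uInf Acc P u := (hW1 u huW).symm
            _ ≤ uB Acc P (n+1) u := iInf_le _ _
          rw [h1]
          calc ∑ s', κ u s' * stay Acc κ n s' ≤ ∑ s', κ u s' * 1 :=
            Finset.sum_le_sum fun s' _ => mul_le_mul_right (stay_le_one Acc κ n s') _
          _ = 1 := by simp [pmf_sum_eq_one]
        · obtain ⟨a, -, hκa⟩ := hOut u huW
          rw [hκa]
          show (∑ s', P u a s' * stay Acc κ n s') ≤ uB Acc P (n+1) u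
          simp only [uB, TT, if_neg hunacc]
          refine le_trans ?_ (le_iSup (fun b : A u => ∑ s', P u b s' * uB Acc P n s') a)
          exact Finset.sum_le_sum fun s' _ => mul_le_mul_right (ih s') _
  have huInfstay : ∀ n u, uInf Acc P u ≤ stay Acc κ n u := by
    intro n
    induction n with
    | zero =>
      intro u
      simp only [stay]
      split
      · rw [uInf_acc Acc P ‹_›]
      · exact uInf_le_one Acc P u
    | succ n ih =>
      intro u
      simp only [stay]
      split
      · rw [uInf_acc Acc P ‹_›]
      · rename_i hunacc
        by_cases huW : u ∈ WinRegion Acc μ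
        · rw [hW1 u huW]
          calc (1:ℝ≥0∞) = ∑ s', κ u s' := (pmf_sum_eq_one (κ u)).symm
          _ ≤ ∑ s', κ u s' * stay Acc κ n s' := by
            refine Finset.sum_le_sum fun s' _ => ?_
            by_cases hz : κ u s' = 0
            · rw [hz, zero_mul]
            · have hs'W : s' ∈ WinRegion Acc μ := hsupp u huW hz
              have h1 : (1:ℝ≥0∞) ≤ stay Acc κ n s' := (hW1 s' hs'W) ▸ ih s'
              calc κ u s' = κ u s' * 1 := (mul_one _).symm
              _ ≤ κ u s' * stay Acc κ n s' := mul_le_mul_right h1 _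
        · calc uInf Acc P u = ∑ s', κ u s' * uInf Acc P s' := (hfix u huW hunacc).symm
          _ ≤ ∑ s', κ u s' * stay Acc κ n s' :=
            Finset.sum_le_sum fun s' _ => mul_le_mul_right (ih s') _
  refine le_antisymm ?_ (le_iInf fun n => huInfstay n s)
  show (⨅ n, stay Acc κ n s) ≤ ⨅ n, uB Acc P n s
  exact le_iInf fun n => le_trans (iInf_le _ n) (hstayuB n s)
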